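/- Let n ≥ 1, 1 ≤ L ≤ n, Nr ≥ 1, Nu ≥ 2 be integers. Let S ⊆ Fin n and, for u = 1, …, Nu−1, S_u ⊆ Fin n, each of cardinality L. Let (ξ_ℓ) and (ξ_ℓ^{(u)}) for u = 1,…,Nu−1 be i.i.d. standard complex Gaussian families, all Nu families mutually independent. Define h_ℓ = √(Nr/L)·ξ_ℓ·1{ℓ∈S} and h^{(u)}_ℓ = √(Nr/L)·ξ^{(u)}_ℓ·1{ℓ∈S_u}. Let W ∈ Matrix (Fin n) (Fin n) ℂ satisfy |W ℓ i| = 1/√n for all ℓ, i. Then E[ Σ_{i ∈ Fin n} |Σ_ℓ conj(h_ℓ)·(W ℓ i)|² · Σ_{u=1}^{Nu−1} |Σ_ℓ conj(h^{(u)}_ℓ)·(W ℓ i)|² ] = Nr²·(Nu−1)/n. (Lemma 2: the cross quantization noise variance for two-stage analog combining with MRC is E[Ψ_k^cross] = N_r²·(N_u−1)/N_RF; the value does not depend on the supports.) -/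

import Mathlib

open MeasureTheory ProbabilityTheory
open Real
open scoped NNReal ENNReal

/-- Real (`b = true`) or imaginary (`b = false`) part of a complex number. -/
noncomputable def cpart (b : Bool) (z : ℂ) : ℝ := if b then z.re else z.im

/-- A family of complex random variables is i.i.d. standard complex Gaussian if all
of its real and imaginary parts are mutually independent, each with law
`gaussianReal 0 (1/2)`. -/
def IsStdCGaussianFamily {Ω : Type*} [MeasurableSpace Ω] (μ : Measure Ω)
    {ι : Type*} (ξ : ι → Ω → ℂ) : Prop :=
  iIndepFun (m := fun _ : ι × Bool => (inferInstance : MeasurableSpace ℝ))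
      (fun p ω => cpart p.2 (ξ p.1 ω)) μ
  ∧ ∀ p : ι × Bool,
      Measure.map (fun ω => cpart p.2 (ξ p.1 ω)) μ = gaussianReal 0 (1 / 2)

section AuxLemmas

lemma gaussian_pdf_half (x : ℝ) :
    gaussianPDFReal 0 (1/2) x = (Real.sqrt π)⁻¹ * Real.exp (-x^2) := by
  unfold gaussianPDFReal
  have h1 : 2 * π * (((1:ℝ≥0)/2 : ℝ≥0) : ℝ) = π := by push_cast; ring
  have h2 : (2 : ℝ) * (((1:ℝ≥0)/2 : ℝ≥0) : ℝ) = 1 := by push_cast; ring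
  rw [show ((1/2 : ℝ≥0)) = ((1:ℝ≥0)/2) from rfl, h1, h2]
  simp [sub_zero]

lemma gauss_wd_integral (g : ℝ → ℝ) :
    ∫ x, g x ∂(gaussianReal 0 (1/2)) = ∫ x, gaussianPDFReal 0 (1/2) x * g x := by
  rw [gaussianReal_of_var_ne_zero 0 (by norm_num)]
  have hd : (gaussianPDF 0 (1/2))
      = fun x => ((Real.toNNReal (gaussianPDFReal 0 (1/2) x) : ℝ≥0) : ℝ≥0∞) := rfl
  rw [hd, integral_withDensity_eq_integral_smul
    ((measurable_gaussianPDFReal 0 (1/2)).real_toNNReal) g]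
  congr 1; ext x
  rw [NNReal.smul_def, smul_eq_mul, Real.coe_toNNReal _ (gaussianPDFReal_nonneg _ _ _)]

lemma gauss_wd_integrable (g : ℝ → ℝ) :
    Integrable g (gaussianReal 0 (1/2))
      ↔ Integrable (fun x => gaussianPDFReal 0 (1/2) x * g x) volume := by
  rw [gaussianReal_of_var_ne_zero 0 (by norm_num)]
  have hd : (gaussianPDF 0 (1/2))
      = fun x => ((Real.toNNReal (gaussianPDFReal 0 (1/2) x) : ℝ≥0) : ℝ≥0∞) := rfl
  rw [hd, integrable_withDensity_iff_integrable_smul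
    ((measurable_gaussianPDFReal 0 (1/2)).real_toNNReal)]
  constructor <;> intro hh <;> refine hh.congr (Filter.Eventually.of_forall fun x => ?_) <;>
    simp only [NNReal.smul_def, smul_eq_mul,
      Real.coe_toNNReal _ (gaussianPDFReal_nonneg _ _ _)]

lemma gauss_integrable_sq :
    Integrable (fun x : ℝ => x^2) (gaussianReal 0 (1/2)) := by
  rw [gauss_wd_integrable]
  have h : Integrable (fun x : ℝ => x ^ (2:ℝ) * Real.exp (-1 * x^2)) volume :=
    integrable_rpow_mul_exp_neg_mul_sq one_pos (by norm_num)
  have he : (fun x : ℝ => gaussianPDFReal 0 (1/2) x * x^2)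
      = fun x : ℝ => (Real.sqrt π)⁻¹ * (x ^ (2:ℝ) * Real.exp (-1 * x^2)) := by
    ext x
    rw [gaussian_pdf_half, show ((2:ℝ)) = ((2:ℕ):ℝ) by norm_num, Real.rpow_natCast,
      neg_one_mul]
    ring
  rw [he]
  exact h.const_mul _

lemma gauss_integrable_id :
    Integrable (fun x : ℝ => x) (gaussianReal 0 (1/2)) := by
  rw [gauss_wd_integrable]
  have h : Integrable (fun x : ℝ => x * Real.exp (-1 * x^2)) volume :=
    integrable_mul_exp_neg_mul_sq one_pos
  have he : (fun x : ℝ => gaussianPDFReal 0 (1/2) x * x)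
      = fun x : ℝ => (Real.sqrt π)⁻¹ * (x * Real.exp (-1 * x^2)) := by
    ext x
    rw [gaussian_pdf_half, neg_one_mul]
    ring
  rw [he]
  exact h.const_mul _

lemma gauss_int_id : ∫ x, x ∂(gaussianReal 0 (1/2)) = 0 := by
  rw [gauss_wd_integral]
  have hneg := MeasureTheory.integral_neg_eq_self
    (fun x => gaussianPDFReal 0 (1/2) x * x) (volume : Measure ℝ)
  have heq : (fun x : ℝ => gaussianPDFReal 0 (1/2) (-x) * (-x))
      = fun x => -(gaussianPDFReal 0 (1/2) x * x) := by
    ext x; rw [gaussian_pdf_half, gaussian_pdf_half, neg_sq]; ring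
  rw [heq, integral_neg] at hneg
  linarith

lemma gauss_int_sq : ∫ x, x^2 ∂(gaussianReal 0 (1/2)) = 1/2 := by
  rw [gauss_wd_integral]
  have hstep : (fun x : ℝ => gaussianPDFReal 0 (1/2) x * x^2)
      = fun x : ℝ => (Real.sqrt π)⁻¹ * (x^2 * Real.exp (-x^2)) := by
    ext x; rw [gaussian_pdf_half]; ring
  rw [hstep, integral_const_mul]
  have hJ : ∫ x : ℝ, x^2 * Real.exp (-x^2) = Real.sqrt π / 2 := by
    have h0 : (fun x : ℝ => x^2 * Real.exp (-x^2))
        = fun x : ℝ => (fun t : ℝ => t^2 * Real.exp (-t^2)) |x| := by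
      ext x; simp [sq_abs]
    rw [h0, integral_comp_abs (f := fun t : ℝ => t^2 * Real.exp (-t^2))]
    have h1 : ∫ x in Set.Ioi (0:ℝ), x^2 * Real.exp (-x^2)
        = ∫ x in Set.Ioi (0:ℝ), x ^ (2:ℝ) * Real.exp (-x ^ (2:ℝ)) := by
      refine setIntegral_congr_fun measurableSet_Ioi (fun x _ => ?_)
      rw [show ((2:ℝ)) = ((2:ℕ):ℝ) by norm_num, Real.rpow_natCast]
    rw [h1, integral_rpow_mul_exp_neg_rpow (by norm_num) (by norm_num)]
    have hg : Real.Gamma (((2:ℝ)+1)/2) = Real.sqrt π / 2 := by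
      rw [show ((2:ℝ)+1)/2 = 1/2 + 1 by norm_num,
        Real.Gamma_add_one (by norm_num), Real.Gamma_one_half_eq]
      ring
    rw [hg]; ring
  rw [hJ]
  have hne : Real.sqrt π ≠ 0 := ne_of_gt (Real.sqrt_pos.mpr Real.pi_pos)
  field_simp

lemma gauss_memLp2 : MemLp (id : ℝ → ℝ) 2 (gaussianReal 0 (1/2)) := by
  rw [memLp_two_iff_integrable_sq aestronglyMeasurable_id]
  exact gauss_integrable_sq

section Family

variable {Ω : Type*} [MeasurableSpace Ω] {μ : Measure Ω} [IsProbabilityMeasure μ]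
  {ι : Type*} {X : ι → Ω → ℝ}

lemma my_iIndepFun_ae_eq {β : ι → Type*} {m : ∀ i, MeasurableSpace (β i)}
    {f g : ∀ i, Ω → β i}
    (hf : iIndepFun (m := m) f μ) (hfg : ∀ i, f i =ᵐ[μ] g i) : iIndepFun (m := m) g μ := by
  rw [iIndepFun_iff_measure_inter_preimage_eq_mul] at hf ⊢
  intro Sf sets hsets
  have hh : ∀ᵐ ω ∂μ, ∀ i : {x // x ∈ Sf}, f i.1 ω = g i.1 ω :=
    ae_all_iff.2 fun i => hfg i.1
  have h2 : (⋂ i ∈ Sf, f i ⁻¹' sets i) =ᵐ[μ] (⋂ i ∈ Sf, g i ⁻¹' sets i) := by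
    rw [Filter.eventuallyEq_set]
    filter_upwards [hh] with ω hω
    simp only [Set.mem_iInter, Set.mem_preimage]
    constructor
    · intro hx i hi; rw [← hω ⟨i, hi⟩]; exact hx i hi
    · intro hx i hi; rw [hω ⟨i, hi⟩]; exact hx i hi
  calc μ (⋂ i ∈ Sf, g i ⁻¹' sets i) = μ (⋂ i ∈ Sf, f i ⁻¹' sets i) :=
        (measure_congr h2).symm
    _ = ∏ i ∈ Sf, μ (f i ⁻¹' sets i) := hf Sf hsets
    _ = ∏ i ∈ Sf, μ (g i ⁻¹' sets i) := by
        refine Finset.prod_congr rfl fun i hi => measure_congr ?_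
        rw [Filter.eventuallyEq_set]
        filter_upwards [hfg i] with ω hω
        simp [Set.mem_preimage, hω]

lemma fam_memLp2 {p : ι} (hm : Measurable (X p))
    (hlaw : μ.map (X p) = gaussianReal 0 (1/2)) : MemLp (X p) 2 μ := by
  have h := gauss_memLp2
  rw [← hlaw] at h
  exact (memLp_map_measure_iff aestronglyMeasurable_id hm.aemeasurable).1 h

lemma fam_int_zero {p : ι} (hm : Measurable (X p))
    (hlaw : μ.map (X p) = gaussianReal 0 (1/2)) : ∫ ω, X p ω ∂μ = 0 := by
  have h : ∫ x, x ∂(μ.map (X p)) = ∫ ω, X p ω ∂μ :=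
    integral_map hm.aemeasurable aestronglyMeasurable_id
  rw [← h, hlaw, gauss_int_id]

lemma fam_int_sq {p : ι} (hm : Measurable (X p))
    (hlaw : μ.map (X p) = gaussianReal 0 (1/2)) : ∫ ω, (X p ω)^2 ∂μ = 1/2 := by
  have h : ∫ x, x^2 ∂(μ.map (X p)) = ∫ ω, (X p ω)^2 ∂μ :=
    integral_map hm.aemeasurable ((measurable_id.pow_const 2).aestronglyMeasurable)
  rw [← h, hlaw, gauss_int_sq]

lemma L2mul_integrable {f g : Ω → ℝ} (hf : MemLp f 2 μ) (hg : MemLp g 2 μ) :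
    Integrable (fun ω => f ω * g ω) μ := by
  have h2 : Integrable (fun ω => (f ω ^ 2 + g ω ^ 2) / 2) μ :=
    (hf.integrable_sq.add hg.integrable_sq).div_const 2
  refine h2.mono' (hf.aestronglyMeasurable.mul hg.aestronglyMeasurable)
    (Filter.Eventually.of_forall fun ω => ?_)
  have := sq_nonneg (|f ω| - |g ω|)
  have h1 : ‖f ω * g ω‖ = |f ω| * |g ω| := by rw [Real.norm_eq_abs, abs_mul]
  rw [h1]
  nlinarith [sq_abs (f ω), sq_abs (g ω)]

lemma fam_int_mul [DecidableEq ι] (hm : ∀ p, Measurable (X p))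
    (hindep : iIndepFun (m := fun _ : ι => (inferInstance : MeasurableSpace ℝ)) X μ)
    (hlaw : ∀ p, μ.map (X p) = gaussianReal 0 (1/2)) (p q : ι) :
    ∫ ω, X p ω * X q ω ∂μ = if p = q then 1/2 else 0 := by
  by_cases hpq : p = q
  · subst hpq
    rw [if_pos rfl, ← fam_int_sq (hm p) (hlaw p)]
    congr 1; ext ω; ring
  · rw [if_neg hpq]
    have hip : Integrable (X p) μ := (fam_memLp2 (hm p) (hlaw p)).integrable one_le_two
    have hiq : Integrable (X q) μ := (fam_memLp2 (hm q) (hlaw q)).integrable one_le_two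
    have h := (hindep.indepFun hpq).integral_mul_eq_mul_integral hip.aestronglyMeasurable hiq.aestronglyMeasurable
    have h' : ∫ ω, X p ω * X q ω ∂μ = (∫ ω, X p ω ∂μ) * ∫ ω, X q ω ∂μ := h
    rw [h', fam_int_zero (hm p) (hlaw p), fam_int_zero (hm q) (hlaw q)]
    ring

lemma fam_sum_memLp {κ : Type*} [Fintype κ] (e : κ → ι) (c : κ → ℝ)
    (hm : ∀ p, Measurable (X p)) (hlaw : ∀ p, μ.map (X p) = gaussianReal 0 (1/2)) :
    MemLp (fun ω => ∑ k, c k * X (e k) ω) 2 μ := by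
  exact memLp_finset_sum (f := fun k (ω : Ω) => c k * X (e k) ω) Finset.univ
    (fun k _ => (fam_memLp2 (hm (e k)) (hlaw (e k))).const_mul (c k))

lemma fam_sum_int_sq [DecidableEq ι] {κ : Type*} [Fintype κ] [DecidableEq κ] {e : κ → ι} (he : Function.Injective e)
    (c : κ → ℝ) (hm : ∀ p, Measurable (X p))
    (hindep : iIndepFun (m := fun _ : ι => (inferInstance : MeasurableSpace ℝ)) X μ)
    (hlaw : ∀ p, μ.map (X p) = gaussianReal 0 (1/2)) :
    ∫ ω, (∑ k, c k * X (e k) ω)^2 ∂μ = ∑ k, (c k)^2 / 2 := by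
  have hint : ∀ k j : κ, Integrable (fun ω => c k * c j * (X (e k) ω * X (e j) ω)) μ :=
    fun k j => (L2mul_integrable (fam_memLp2 (hm (e k)) (hlaw (e k)))
      (fam_memLp2 (hm (e j)) (hlaw (e j)))).const_mul _
  have expand : (fun ω => (∑ k, c k * X (e k) ω)^2)
      = fun ω => ∑ k, ∑ j, c k * c j * (X (e k) ω * X (e j) ω) := by
    ext ω
    rw [sq, Finset.sum_mul_sum]
    exact Finset.sum_congr rfl fun k _ => Finset.sum_congr rfl fun j _ => by ring
  rw [expand, integral_finset_sum Finset.univ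
    (fun k _ => integrable_finset_sum Finset.univ fun j _ => hint k j)]
  have hterm : ∀ k : κ, ∫ ω, ∑ j, c k * c j * (X (e k) ω * X (e j) ω) ∂μ
      = (c k)^2 / 2 := by
    intro k
    rw [integral_finset_sum Finset.univ (fun j _ => hint k j)]
    have : ∀ j : κ, ∫ ω, c k * c j * (X (e k) ω * X (e j) ω) ∂μ
        = c k * c j * if k = j then 1/2 else 0 := by
      intro j
      rw [integral_const_mul, fam_int_mul hm hindep hlaw (e k) (e j)]
      congr 1
      by_cases hkj : k = j
      · simp [hkj]
      · rw [if_neg (fun hc => hkj (he hc)), if_neg hkj]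
    simp_rw [this]
    rw [Finset.sum_eq_single k (fun j _ hjk => by rw [if_neg (Ne.symm hjk), mul_zero])
      (fun hk => absurd (Finset.mem_univ k) hk)]
    rw [if_pos rfl]; ring
  exact Finset.sum_congr rfl fun k _ => hterm k

end Family
end AuxLemmas

set_option maxHeartbeats 1000000 in
/-- Lemma 2: the cross quantization noise variance for two-stage
analog combining with MRC is `E[Ψ_k^cross] = Nr²(Nu−1)/n`.  The `Nu` Gaussian
families (that of the associated user and of the `Nu − 1` other users) are jointly
i.i.d. standard complex Gaussian, hence mutually independent. -/
theorem stmt_14 {n : ℕ} (hn : 1 ≤ n) (L Nr Nu : ℕ) (hL1 : 1 ≤ L) (hLn : L ≤ n)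
    (hNr : 1 ≤ Nr) (hNu : 2 ≤ Nu)
    (S : Finset (Fin n)) (hS : S.card = L)
    (S' : Fin (Nu - 1) → Finset (Fin n)) (hS' : ∀ u, (S' u).card = L)
    {Ω : Type*} [MeasurableSpace Ω] (μ : Measure Ω) [IsProbabilityMeasure μ]
    (ξ : Fin n → Ω → ℂ) (ξ' : Fin (Nu - 1) → Fin n → Ω → ℂ)
    (hgauss : IsStdCGaussianFamily μ
      (fun p : Option (Fin (Nu - 1)) × Fin n =>
        Option.elim p.1 (ξ p.2) (fun u => ξ' u p.2)))
    (W : Matrix (Fin n) (Fin n) ℂ)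
    (hW : ∀ ℓ i, ‖W ℓ i‖ = 1 / Real.sqrt n)
    (h : Ω → Fin n → ℂ) (h' : Fin (Nu - 1) → Ω → Fin n → ℂ)
    (hdef : ∀ ω ℓ, h ω ℓ =
      if ℓ ∈ S then ((Real.sqrt ((Nr : ℝ) / L) : ℝ) : ℂ) * ξ ℓ ω else 0)
    (hdef' : ∀ u ω ℓ, h' u ω ℓ =
      if ℓ ∈ S' u then ((Real.sqrt ((Nr : ℝ) / L) : ℝ) : ℂ) * ξ' u ℓ ω else 0) :
    ∫ ω, ∑ i,
        ‖∑ ℓ, (starRingEnd ℂ) (h ω ℓ) * W ℓ i‖ ^ 2 *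
          ∑ u : Fin (Nu - 1),
            ‖∑ ℓ, (starRingEnd ℂ) (h' u ω ℓ) * W ℓ i‖ ^ 2 ∂μ
      = (Nr : ℝ) ^ 2 * ((Nu : ℝ) - 1) / n := by
  classical
  have hn0 : (n : ℝ) ≠ 0 := Nat.cast_ne_zero.mpr (by omega)
  have hL0 : (L : ℝ) ≠ 0 := Nat.cast_ne_zero.mpr (by omega)
  set c0 : ℝ := Real.sqrt ((Nr : ℝ) / L) with hc0
  have hc0sq : c0 ^ 2 = (Nr : ℝ) / L := Real.sq_sqrt (by positivity)
  -- the real-valued component family (ae-measurable version)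
  set X0 : (Option (Fin (Nu - 1)) × Fin n) × Bool → Ω → ℝ :=
    fun p ω => cpart p.2 (Option.elim p.1.1 (ξ p.1.2) (fun u => ξ' u p.1.2) ω) with hX0def
  have hindep0 : iIndepFun
      (m := fun _ : (Option (Fin (Nu - 1)) × Fin n) × Bool => (inferInstance : MeasurableSpace ℝ))
      X0 μ := hgauss.1
  have hlaw0 : ∀ p, μ.map (X0 p) = gaussianReal 0 (1/2) := fun p => hgauss.2 p
  have hae : ∀ p, AEMeasurable (X0 p) μ := by
    intro p
    apply aemeasurable_of_map_neZero
    rw [hlaw0 p]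
    infer_instance
  set X : (Option (Fin (Nu - 1)) × Fin n) × Bool → Ω → ℝ :=
    fun p => (hae p).mk (X0 p) with hXdef
  have hXm : ∀ p, Measurable (X p) := fun p => (hae p).measurable_mk
  have hXeq : ∀ p, X0 p =ᵐ[μ] X p := fun p => (hae p).ae_eq_mk
  have hlaw : ∀ p, μ.map (X p) = gaussianReal 0 (1/2) := by
    intro p
    rw [← Measure.map_congr (hXeq p)]
    exact hlaw0 p
  have hindep : iIndepFun
      (m := fun _ : (Option (Fin (Nu - 1)) × Fin n) × Bool => (inferInstance : MeasurableSpace ℝ))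
      X μ := my_iIndepFun_ae_eq hindep0 hXeq
  -- |W ℓ i|² = 1/n
  have hWsq : ∀ ℓ i, (W ℓ i).re ^ 2 + (W ℓ i).im ^ 2 = 1 / n := by
    intro ℓ i
    have h1 : ‖W ℓ i‖ ^ 2 = 1 / n := by
      rw [hW ℓ i, div_pow, one_pow, Real.sq_sqrt (by positivity)]
    rw [← h1, Complex.sq_norm, Complex.normSq_apply]
    ring
  -- the squared magnitudes in terms of the measurable components
  set A : Option (Fin (Nu - 1)) → Finset (Fin n) → Fin n → Ω → ℝ :=
    fun o T i ω =>
      (∑ ℓ, if ℓ ∈ T then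
        c0 * (X ((o,ℓ),true) ω * (W ℓ i).re + X ((o,ℓ),false) ω * (W ℓ i).im) else 0) ^ 2 +
      (∑ ℓ, if ℓ ∈ T then
        c0 * (X ((o,ℓ),true) ω * (W ℓ i).im - X ((o,ℓ),false) ω * (W ℓ i).re) else 0) ^ 2
    with hAdef
  -- generic second-moment computation for linear combinations
  have hsum2 : ∀ (o : Option (Fin (Nu - 1))) (a b : Fin n → ℝ),
      MemLp (fun ω => ∑ ℓ, (a ℓ * X ((o, ℓ), true) ω + b ℓ * X ((o, ℓ), false) ω)) 2 μ ∧
      ∫ ω, (∑ ℓ, (a ℓ * X ((o, ℓ), true) ω + b ℓ * X ((o, ℓ), false) ω)) ^ 2 ∂μ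
        = ∑ ℓ, ((a ℓ) ^ 2 + (b ℓ) ^ 2) / 2 := by
    intro o a b
    have he : Function.Injective
        (fun k : Fin n × Bool => (((o, k.1), k.2) : (Option (Fin (Nu-1)) × Fin n) × Bool)) := by
      intro k1 k2 hk
      simp only [Prod.mk.injEq] at hk
      exact Prod.ext hk.1.2 hk.2
    set cf : Fin n × Bool → ℝ := fun k => if k.2 then a k.1 else b k.1 with hcf
    have hrw : (fun ω => ∑ k : Fin n × Bool, cf k * X ((o, k.1), k.2) ω)
        = fun ω => ∑ ℓ, (a ℓ * X ((o, ℓ), true) ω + b ℓ * X ((o, ℓ), false) ω) := by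
      funext ω
      rw [Fintype.sum_prod_type]
      refine Finset.sum_congr rfl fun ℓ _ => ?_
      rw [Fintype.sum_bool]
      simp [hcf]
    constructor
    · have hm := fam_sum_memLp (μ := μ) (X := X)
        (e := fun k : Fin n × Bool => ((o, k.1), k.2)) cf hXm hlaw
      rwa [hrw] at hm
    · have h2 := fam_sum_int_sq (μ := μ) (X := X) (e := fun k : Fin n × Bool => ((o, k.1), k.2))
        he cf hXm hindep hlaw
      have hfn : (fun ω => (∑ ℓ, (a ℓ * X ((o, ℓ), true) ω + b ℓ * X ((o, ℓ), false) ω)) ^ 2)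
          = fun ω => (∑ k : Fin n × Bool, cf k * X ((o, k.1), k.2) ω) ^ 2 := by
        funext ω
        rw [congrFun hrw ω]
      calc ∫ ω, (∑ ℓ, (a ℓ * X ((o, ℓ), true) ω + b ℓ * X ((o, ℓ), false) ω)) ^ 2 ∂μ
          = ∫ ω, (∑ k : Fin n × Bool, cf k * X ((o, k.1), k.2) ω) ^ 2 ∂μ := by rw [hfn]
        _ = ∑ k : Fin n × Bool, (cf k) ^ 2 / 2 := h2
        _ = ∑ ℓ, ((a ℓ) ^ 2 + (b ℓ) ^ 2) / 2 := by
            rw [Fintype.sum_prod_type]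
            refine Finset.sum_congr rfl fun ℓ _ => ?_
            rw [Fintype.sum_bool]
            simp [hcf]
            ring
  -- integrability and expectation of each A
  have hA_basic : ∀ (o : Option (Fin (Nu - 1))) (T : Finset (Fin n)), T.card = L → ∀ i : Fin n,
      Integrable (A o T i) μ ∧ ∫ ω, A o T i ω ∂μ = (Nr : ℝ) / n := by
    intro o T hT i
    obtain ⟨hm1, hi1⟩ := hsum2 o (fun ℓ => if ℓ ∈ T then c0 * (W ℓ i).re else 0)
      (fun ℓ => if ℓ ∈ T then c0 * (W ℓ i).im else 0)
    obtain ⟨hm2, hi2⟩ := hsum2 o (fun ℓ => if ℓ ∈ T then c0 * (W ℓ i).im else 0)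
      (fun ℓ => if ℓ ∈ T then -(c0 * (W ℓ i).re) else 0)
    have e1 : ∀ ω, (∑ ℓ, if ℓ ∈ T then
          c0 * (X ((o,ℓ),true) ω * (W ℓ i).re + X ((o,ℓ),false) ω * (W ℓ i).im) else 0)
        = ∑ ℓ, ((if ℓ ∈ T then c0 * (W ℓ i).re else 0) * X ((o, ℓ), true) ω
            + (if ℓ ∈ T then c0 * (W ℓ i).im else 0) * X ((o, ℓ), false) ω) := by
      intro ω
      refine Finset.sum_congr rfl fun ℓ _ => ?_
      by_cases hc : ℓ ∈ T
      · simp only [if_pos hc]; ring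
      · simp only [if_neg hc]; simp
    have e2 : ∀ ω, (∑ ℓ, if ℓ ∈ T then
          c0 * (X ((o,ℓ),true) ω * (W ℓ i).im - X ((o,ℓ),false) ω * (W ℓ i).re) else 0)
        = ∑ ℓ, ((if ℓ ∈ T then c0 * (W ℓ i).im else 0) * X ((o, ℓ), true) ω
            + (if ℓ ∈ T then -(c0 * (W ℓ i).re) else 0) * X ((o, ℓ), false) ω) := by
      intro ω
      refine Finset.sum_congr rfl fun ℓ _ => ?_
      by_cases hc : ℓ ∈ T
      · simp only [if_pos hc]; ring
      · simp only [if_neg hc]; simp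
    have hArw : A o T i = fun ω =>
        (∑ ℓ, ((if ℓ ∈ T then c0 * (W ℓ i).re else 0) * X ((o, ℓ), true) ω
            + (if ℓ ∈ T then c0 * (W ℓ i).im else 0) * X ((o, ℓ), false) ω)) ^ 2 +
        (∑ ℓ, ((if ℓ ∈ T then c0 * (W ℓ i).im else 0) * X ((o, ℓ), true) ω
            + (if ℓ ∈ T then -(c0 * (W ℓ i).re) else 0) * X ((o, ℓ), false) ω)) ^ 2 := by
      funext ω
      simp only [hAdef]
      rw [e1 ω, e2 ω]
    constructor
    · rw [hArw]
      exact hm1.integrable_sq.add hm2.integrable_sq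
    · rw [hArw]
      have hint := integral_add hm1.integrable_sq hm2.integrable_sq
      rw [hint, hi1, hi2]
      have hv1 : ∀ ℓ : Fin n, ((if ℓ ∈ T then c0 * (W ℓ i).re else 0) ^ 2
            + (if ℓ ∈ T then c0 * (W ℓ i).im else 0) ^ 2) / 2
          = if ℓ ∈ T then c0 ^ 2 * (1 / n) / 2 else 0 := by
        intro ℓ
        by_cases hc : ℓ ∈ T
        · simp only [if_pos hc]
          rw [← hWsq ℓ i]; ring
        · simp only [if_neg hc]; norm_num
      have hv2 : ∀ ℓ : Fin n, ((if ℓ ∈ T then c0 * (W ℓ i).im else 0) ^ 2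
            + (if ℓ ∈ T then -(c0 * (W ℓ i).re) else 0) ^ 2) / 2
          = if ℓ ∈ T then c0 ^ 2 * (1 / n) / 2 else 0 := by
        intro ℓ
        by_cases hc : ℓ ∈ T
        · simp only [if_pos hc]
          rw [← hWsq ℓ i]; ring
        · simp only [if_neg hc]; norm_num
      simp_rw [hv1, hv2]
      rw [Finset.sum_ite_mem, Finset.univ_inter, Finset.sum_const, hT]
      rw [nsmul_eq_mul, hc0sq]
      field_simp
      ring
  -- independence of the two factors
  have hApair : ∀ (u : Fin (Nu - 1)) (i : Fin n),
      IndepFun (A none S i) (A (some u) (S' u) i) μ := by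
    intro u i
    set S1 : Finset ((Option (Fin (Nu - 1)) × Fin n) × Bool) :=
      Finset.univ.filter (fun p => p.1.1 = none) with hS1
    set S2 : Finset ((Option (Fin (Nu - 1)) × Fin n) × Bool) :=
      Finset.univ.filter (fun p => p.1.1 = some u) with hS2
    have hmem1 : ∀ (ℓ : Fin n) (b : Bool),
        ((((none : Option (Fin (Nu-1))), ℓ), b)
          : (Option (Fin (Nu - 1)) × Fin n) × Bool) ∈ S1 := by
      intro ℓ b
      rw [hS1, Finset.mem_filter]
      exact ⟨Finset.mem_univ _, rfl⟩
    have hmem2 : ∀ (ℓ : Fin n) (b : Bool),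
        (((some u, ℓ), b) : (Option (Fin (Nu - 1)) × Fin n) × Bool) ∈ S2 := by
      intro ℓ b
      rw [hS2, Finset.mem_filter]
      exact ⟨Finset.mem_univ _, rfl⟩
    have hdisj : Disjoint S1 S2 := by
      rw [Finset.disjoint_left]
      intro p h1 h2
      rw [hS1, Finset.mem_filter] at h1
      rw [hS2, Finset.mem_filter] at h2
      rw [h1.2] at h2
      cases h2.2
    have hbase := hindep.indepFun_finset S1 S2 hdisj hXm
    set φ : (∀ _ : S1, ℝ) → ℝ := fun v =>
      (∑ ℓ, if ℓ ∈ S then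
        c0 * (v ⟨((none,ℓ),true), hmem1 ℓ true⟩ * (W ℓ i).re
          + v ⟨((none,ℓ),false), hmem1 ℓ false⟩ * (W ℓ i).im) else 0) ^ 2 +
      (∑ ℓ, if ℓ ∈ S then
        c0 * (v ⟨((none,ℓ),true), hmem1 ℓ true⟩ * (W ℓ i).im
          - v ⟨((none,ℓ),false), hmem1 ℓ false⟩ * (W ℓ i).re) else 0) ^ 2 with hφ
    set ψ : (∀ _ : S2, ℝ) → ℝ := fun v =>
      (∑ ℓ, if ℓ ∈ S' u then
        c0 * (v ⟨((some u,ℓ),true), hmem2 ℓ true⟩ * (W ℓ i).re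
          + v ⟨((some u,ℓ),false), hmem2 ℓ false⟩ * (W ℓ i).im) else 0) ^ 2 +
      (∑ ℓ, if ℓ ∈ S' u then
        c0 * (v ⟨((some u,ℓ),true), hmem2 ℓ true⟩ * (W ℓ i).im
          - v ⟨((some u,ℓ),false), hmem2 ℓ false⟩ * (W ℓ i).re) else 0) ^ 2 with hψ
    have hφm : Measurable φ := by
      rw [hφ]
      apply Measurable.add
      · apply Measurable.pow_const
        apply Finset.measurable_sum
        intro ℓ _
        by_cases hc : ℓ ∈ S
        · simp only [if_pos hc]
          apply Measurable.const_mul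
          exact ((measurable_pi_apply _).mul_const _).add ((measurable_pi_apply _).mul_const _)
        · simp only [if_neg hc]
          exact measurable_const
      · apply Measurable.pow_const
        apply Finset.measurable_sum
        intro ℓ _
        by_cases hc : ℓ ∈ S
        · simp only [if_pos hc]
          apply Measurable.const_mul
          exact ((measurable_pi_apply _).mul_const _).sub ((measurable_pi_apply _).mul_const _)
        · simp only [if_neg hc]
          exact measurable_const
    have hψm : Measurable ψ := by
      rw [hψ]
      apply Measurable.add
      · apply Measurable.pow_const
        apply Finset.measurable_sum
        intro ℓ _
        by_cases hc : ℓ ∈ S' u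
        · simp only [if_pos hc]
          apply Measurable.const_mul
          exact ((measurable_pi_apply _).mul_const _).add ((measurable_pi_apply _).mul_const _)
        · simp only [if_neg hc]
          exact measurable_const
      · apply Measurable.pow_const
        apply Finset.measurable_sum
        intro ℓ _
        by_cases hc : ℓ ∈ S' u
        · simp only [if_pos hc]
          apply Measurable.const_mul
          exact ((measurable_pi_apply _).mul_const _).sub ((measurable_pi_apply _).mul_const _)
        · simp only [if_neg hc]
          exact measurable_const
    have hcompφ : A none S i = φ ∘ (fun ω (p : S1) => X p.1 ω) := rfl
    have hcompψ : A (some u) (S' u) i = ψ ∘ (fun ω (p : S2) => X p.1 ω) := rfl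
    rw [hcompφ, hcompψ]
    exact hbase.comp hφm hψm
  -- pointwise identification of the integrand (a.e.)
  have hae_all : ∀ᵐ ω ∂μ, ∀ p, X0 p ω = X p ω := ae_all_iff.2 hXeq
  have haeq : (fun ω => ∑ i,
        ‖∑ ℓ, (starRingEnd ℂ) (h ω ℓ) * W ℓ i‖ ^ 2 *
          ∑ u : Fin (Nu - 1),
            ‖∑ ℓ, (starRingEnd ℂ) (h' u ω ℓ) * W ℓ i‖ ^ 2)
      =ᵐ[μ] fun ω => ∑ i, ∑ u : Fin (Nu - 1),
        A none S i ω * A (some u) (S' u) i ω := by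
    filter_upwards [hae_all] with ω hω
    have hnone : ∀ i : Fin n,
        ‖∑ ℓ, (starRingEnd ℂ) (h ω ℓ) * W ℓ i‖ ^ 2 = A none S i ω := by
      intro i
      have hre : ∀ ℓ, ((starRingEnd ℂ) (h ω ℓ) * W ℓ i).re
          = if ℓ ∈ S then
            c0 * (X ((none,ℓ),true) ω * (W ℓ i).re + X ((none,ℓ),false) ω * (W ℓ i).im)
          else 0 := by
        intro ℓ
        rw [hdef ω ℓ]
        by_cases hc : ℓ ∈ S
        · rw [if_pos hc, if_pos hc, ← hω ((none,ℓ),true), ← hω ((none,ℓ),false)]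
          simp only [hX0def, cpart, Option.elim]
          simp [Complex.mul_re, Complex.mul_im]
          ring
        · rw [if_neg hc, if_neg hc]
          simp
      have him : ∀ ℓ, ((starRingEnd ℂ) (h ω ℓ) * W ℓ i).im
          = if ℓ ∈ S then
            c0 * (X ((none,ℓ),true) ω * (W ℓ i).im - X ((none,ℓ),false) ω * (W ℓ i).re)
          else 0 := by
        intro ℓ
        rw [hdef ω ℓ]
        by_cases hc : ℓ ∈ S
        · rw [if_pos hc, if_pos hc, ← hω ((none,ℓ),true), ← hω ((none,ℓ),false)]
          simp only [hX0def, cpart, Option.elim]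
          simp [Complex.mul_re, Complex.mul_im]
          ring
        · rw [if_neg hc, if_neg hc]
          simp
      rw [Complex.sq_norm, Complex.normSq_apply, Complex.re_sum, Complex.im_sum]
      simp only [hAdef]
      rw [Finset.sum_congr rfl fun ℓ _ => hre ℓ, Finset.sum_congr rfl fun ℓ _ => him ℓ]
      ring
    have hsome : ∀ (u : Fin (Nu - 1)) (i : Fin n),
        ‖∑ ℓ, (starRingEnd ℂ) (h' u ω ℓ) * W ℓ i‖ ^ 2
          = A (some u) (S' u) i ω := by
      intro u i
      have hre : ∀ ℓ, ((starRingEnd ℂ) (h' u ω ℓ) * W ℓ i).re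
          = if ℓ ∈ S' u then
            c0 * (X ((some u,ℓ),true) ω * (W ℓ i).re + X ((some u,ℓ),false) ω * (W ℓ i).im)
          else 0 := by
        intro ℓ
        rw [hdef' u ω ℓ]
        by_cases hc : ℓ ∈ S' u
        · rw [if_pos hc, if_pos hc, ← hω ((some u,ℓ),true), ← hω ((some u,ℓ),false)]
          simp only [hX0def, cpart, Option.elim]
          simp [Complex.mul_re, Complex.mul_im]
          ring
        · rw [if_neg hc, if_neg hc]
          simp
      have him : ∀ ℓ, ((starRingEnd ℂ) (h' u ω ℓ) * W ℓ i).im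
          = if ℓ ∈ S' u then
            c0 * (X ((some u,ℓ),true) ω * (W ℓ i).im - X ((some u,ℓ),false) ω * (W ℓ i).re)
          else 0 := by
        intro ℓ
        rw [hdef' u ω ℓ]
        by_cases hc : ℓ ∈ S' u
        · rw [if_pos hc, if_pos hc, ← hω ((some u,ℓ),true), ← hω ((some u,ℓ),false)]
          simp only [hX0def, cpart, Option.elim]
          simp [Complex.mul_re, Complex.mul_im]
          ring
        · rw [if_neg hc, if_neg hc]
          simp
      rw [Complex.sq_norm, Complex.normSq_apply, Complex.re_sum, Complex.im_sum]
      simp only [hAdef]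
      rw [Finset.sum_congr rfl fun ℓ _ => hre ℓ, Finset.sum_congr rfl fun ℓ _ => him ℓ]
      ring
    refine Finset.sum_congr rfl fun i _ => ?_
    rw [hnone i, Finset.mul_sum]
    exact Finset.sum_congr rfl fun u _ => by rw [hsome u i]
  -- put everything together
  have hprod : ∀ (i : Fin n) (u : Fin (Nu - 1)),
      Integrable (fun ω => A none S i ω * A (some u) (S' u) i ω) μ := by
    intro i u
    exact (hApair u i).integrable_mul (hA_basic none S hS i).1
      (hA_basic (some u) (S' u) (hS' u) i).1
  have hval : ∀ (i : Fin n) (u : Fin (Nu - 1)),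
      ∫ ω, A none S i ω * A (some u) (S' u) i ω ∂μ = ((Nr : ℝ) / n) * ((Nr : ℝ) / n) := by
    intro i u
    have hh := (hApair u i).integral_mul_eq_mul_integral (hA_basic none S hS i).1.aestronglyMeasurable
      (hA_basic (some u) (S' u) (hS' u) i).1.aestronglyMeasurable
    have hh' : ∫ ω, A none S i ω * A (some u) (S' u) i ω ∂μ
        = (∫ ω, A none S i ω ∂μ) * ∫ ω, A (some u) (S' u) i ω ∂μ := hh
    rw [hh', (hA_basic none S hS i).2, (hA_basic (some u) (S' u) (hS' u) i).2]
  rw [integral_congr_ae haeq,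
    integral_finset_sum Finset.univ
      (fun i _ => integrable_finset_sum Finset.univ fun u _ => hprod i u)]
  have hstep : ∀ i : Fin n, ∫ ω, ∑ u : Fin (Nu - 1),
      A none S i ω * A (some u) (S' u) i ω ∂μ = ((Nu : ℝ) - 1) * ((Nr : ℝ) / n) ^ 2 := by
    intro i
    rw [integral_finset_sum Finset.univ (fun u _ => hprod i u)]
    simp_rw [hval i]
    rw [Finset.sum_const, Finset.card_univ, Fintype.card_fin, nsmul_eq_mul]
    have hcast : ((Nu - 1 : ℕ) : ℝ) = (Nu : ℝ) - 1 := by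
      rw [Nat.cast_sub (by omega), Nat.cast_one]
    rw [hcast]
    ring
  simp_rw [hstep]
  rw [Finset.sum_const, Finset.card_univ, Fintype.card_fin, nsmul_eq_mul]
  field_simp
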